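/- Let X and Y be measurable spaces, let P_X be a probability measure on X, and let P_{Y|X} = (P_{Y|X=x})_{x∈X} and P_{X|Y} = (P_{X|Y=y})_{y∈Y} be conditional probability measures (Markov kernels) from X to Y and from Y to X, respectively. Let P_Y(B) = ∫ P_{Y|X=x}(B) dP_X(x) be the marginal on Y, and assume the two disintegrations determine the same joint law: for every measurable A ⊆ X×Y, ∫ P_{Y|X=x}(A_x) dP_X(x) = ∫ P_{X|Y=y}(A^y) dP_Y(y), where A_x = {y : (x,y) ∈ A} and A^y = {x : (x,y) ∈ A}. Assume that for every x ∈ X, P_{Y|X=x} ≪ P_Y, and for every y ∈ Y, P_{X|Y=y} ≪ P_X. Then, for P_X P_Y-almost every (x, y), (dP_{X|Y=y}/dP_X)(x) = (dP_{Y|X=x}/dP_Y)(y), where P_X P_Y is the product of the marginals. -/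

import Mathlib

open MeasureTheory ProbabilityTheory
open scoped ENNReal

/-- Bayes-like rule (equality of conditional densities): let `PX` be a
probability measure on `X`, `κ` a Markov kernel from `X` to `Y` and `η` a
Markov kernel from `Y` to `X`, and `PY` the marginal on `Y`
(`PY(B) = ∫ κ x (B) dPX(x)`). Assume the two disintegrations determine the same
joint law: for every measurable `A ⊆ X × Y`,
`∫ κ x (A_x) dPX(x) = ∫ η y (A^y) dPY(y)`. Assume `κ x ≪ PY` for every `x` and
`η y ≪ PX` for every `y`, and let `f` and `g` be jointly measurable choices of
the Radon–Nikodym derivatives `(x, y) ↦ (d(κ x)/dPY)(y)` and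
`(x, y) ↦ (d(η y)/dPX)(x)`, respectively. Then, for `PX × PY`-almost every
`(x, y)`, `(d(η y)/dPX)(x) = (d(κ x)/dPY)(y)`. -/
theorem bayes_like_rule_kernels {X Y : Type*} [MeasurableSpace X] [MeasurableSpace Y]
    (PX : Measure X) [IsProbabilityMeasure PX]
    (κ : Kernel X Y) [IsMarkovKernel κ]
    (η : Kernel Y X) [IsMarkovKernel η]
    (PY : Measure Y) (hPY : ∀ B : Set Y, MeasurableSet B → PY B = ∫⁻ x, κ x B ∂PX)
    (hjoint : ∀ A : Set (X × Y), MeasurableSet A →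
      ∫⁻ x, κ x {y | (x, y) ∈ A} ∂PX = ∫⁻ y, η y {x | (x, y) ∈ A} ∂PY)
    (hacκ : ∀ x, κ x ≪ PY) (hacη : ∀ y, η y ≪ PX)
    (f : X × Y → ℝ≥0∞) (hf : Measurable f)
    (hfd : ∀ x, ∀ B : Set Y, MeasurableSet B → κ x B = ∫⁻ y in B, f (x, y) ∂PY)
    (g : X × Y → ℝ≥0∞) (hg : Measurable g)
    (hgd : ∀ y, ∀ A : Set X, MeasurableSet A → η y A = ∫⁻ x in A, g (x, y) ∂PX) :
    g =ᵐ[PX.prod PY] f := by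
  -- PY is a probability measure
  have hPYprob : IsProbabilityMeasure PY := by
    constructor
    rw [hPY Set.univ MeasurableSet.univ]
    simp
  -- values of withDensity on rectangles
  have hwf : ∀ (s : Set X) (t : Set Y), MeasurableSet s → MeasurableSet t →
      ((PX.prod PY).withDensity f) (s ×ˢ t) = ∫⁻ x in s, κ x t ∂PX := by
    intro s t hs ht
    rw [withDensity_apply _ (hs.prod ht),
      ← Measure.prod_restrict, lintegral_prod _ (hf.aemeasurable)]
    refine setLIntegral_congr_fun hs (fun x _ => ?_)
    rw [hfd x t ht]
  have hwg : ∀ (s : Set X) (t : Set Y), MeasurableSet s → MeasurableSet t →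
      ((PX.prod PY).withDensity g) (s ×ˢ t) = ∫⁻ y in t, η y s ∂PY := by
    intro s t hs ht
    rw [withDensity_apply _ (hs.prod ht), ← Measure.prod_restrict]
    rw [lintegral_prod _ hg.aemeasurable]
    rw [lintegral_lintegral_swap (by exact hg.aemeasurable : AEMeasurable (Function.uncurry fun x y => g (x, y)) ((PX.restrict s).prod (PY.restrict t)))]
    refine setLIntegral_congr_fun ht (fun y _ => ?_)
    rw [hgd y s hs]
  -- the joint hypothesis on rectangles
  have hrect : ∀ (s : Set X) (t : Set Y), MeasurableSet s → MeasurableSet t →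
      ∫⁻ x in s, κ x t ∂PX = ∫⁻ y in t, η y s ∂PY := by
    intro s t hs ht
    have h := hjoint (s ×ˢ t) (hs.prod ht)
    have h1 : ∫⁻ x, κ x {y | (x, y) ∈ s ×ˢ t} ∂PX = ∫⁻ x in s, κ x t ∂PX := by
      rw [← lintegral_indicator hs]
      refine lintegral_congr fun x => ?_
      classical
      rw [Set.indicator_apply]
      split_ifs with hx
      · congr 1; ext y; simp [hx]
      · have : {y | (x, y) ∈ s ×ˢ t} = ∅ := by ext y; simp [hx]
        rw [this, measure_empty]
    have h2 : ∫⁻ y, η y {x | (x, y) ∈ s ×ˢ t} ∂PY = ∫⁻ y in t, η y s ∂PY := by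
      rw [← lintegral_indicator ht]
      refine lintegral_congr fun y => ?_
      classical
      rw [Set.indicator_apply]
      split_ifs with hy
      · congr 1; ext x; simp [hy]
      · have : {x | (x, y) ∈ s ×ˢ t} = ∅ := by ext x; simp [hy]
        rw [this, measure_empty]
    rw [← h1, ← h2, h]
  -- the two withDensity measures are finite
  have hfin_f : IsFiniteMeasure ((PX.prod PY).withDensity f) := by
    constructor
    rw [← Set.univ_prod_univ, hwf _ _ MeasurableSet.univ MeasurableSet.univ]
    calc ∫⁻ x in Set.univ, κ x Set.univ ∂PX ≤ ∫⁻ x in Set.univ, 1 ∂PX := by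
          exact setLIntegral_mono (by fun_prop) (fun x _ => by simp)
      _ < ⊤ := by simp
  have hfin_g : IsFiniteMeasure ((PX.prod PY).withDensity g) := by
    constructor
    rw [← Set.univ_prod_univ, hwg _ _ MeasurableSet.univ MeasurableSet.univ]
    calc ∫⁻ y in Set.univ, η y Set.univ ∂PY ≤ ∫⁻ y in Set.univ, 1 ∂PY := by
          exact setLIntegral_mono (by fun_prop) (fun y _ => by simp)
      _ < ⊤ := by simp
  -- the two withDensity measures coincide
  have hwd : (PX.prod PY).withDensity g = (PX.prod PY).withDensity f := by
    refine MeasureTheory.ext_of_generate_finite _ generateFrom_prod.symm isPiSystem_prod ?_ ?_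
    · rintro A ⟨s, hs, t, ht, rfl⟩
      rw [hwf s t hs ht, hwg s t hs ht, hrect s t hs ht]
    · rw [← Set.univ_prod_univ, hwf _ _ MeasurableSet.univ MeasurableSet.univ,
        hwg _ _ MeasurableSet.univ MeasurableSet.univ,
        hrect _ _ MeasurableSet.univ MeasurableSet.univ]
  exact (withDensity_eq_iff_of_sigmaFinite hg.aemeasurable hf.aemeasurable).mp hwd
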